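/- Let φ be a positively expansive surjective endomorphism of a torsion abelian group G. Then there exists a finite subgroup K ≤ G such that for every finite subgroup F ≤ G there exists m ∈ ℕ with F ⊆ φ^m(K). -/

import Mathlib

/-- In a torsion abelian group, the subgroup generated by a finite set is finite. -/
lemma finite_closure {G : Type*} [AddCommGroup G] (hG : AddMonoid.IsTorsion G)
    {s : Set G} (hs : s.Finite) :
    ((AddSubgroup.closure s : AddSubgroup G) : Set G).Finite := by
  haveI : Finite s := hs.to_subtype
  haveI : AddGroup.FG (AddSubgroup.closure s) := AddGroup.closure_finite_fg s
  have htor : AddMonoid.IsTorsion (AddSubgroup.closure s) := by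
    intro x
    exact AddSubmonoid.isOfFinAddOrder_coe.1 (hG (x : G))
  have : Finite (AddSubgroup.closure s) := AddCommGroup.finite_of_fg_torsion _ htor
  exact (AddSubgroup.closure s : Set G).toFinite

/-- `S` is a positive generator for `φ`. -/
def IsPositiveGenerator {G : Type*} [AddCommGroup G] (φ : AddMonoid.End G)
    (S : AddSubgroup G) : Prop :=
  ∀ F : AddSubgroup G, (F : Set G).Finite →
    ∃ n : ℕ, F ≤ ⨆ k ∈ Finset.range (n + 1), S.map (φ ^ k)

/-- `φ` is positively expansive: it has a finite positive generator. -/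
def PositivelyExpansive {G : Type*} [AddCommGroup G] (φ : AddMonoid.End G) : Prop :=
  ∃ S : AddSubgroup G, (S : Set G).Finite ∧ IsPositiveGenerator φ S

set_option maxHeartbeats 1000000 in
theorem stmt16 {G : Type*} [AddCommGroup G] (hG : AddMonoid.IsTorsion G)
    (φ : AddMonoid.End G) (hsurj : Function.Surjective φ)
    (hexp : PositivelyExpansive φ) :
    ∃ K : AddSubgroup G, (K : Set G).Finite ∧
      ∀ F : AddSubgroup G, (F : Set G).Finite →
        ∃ m : ℕ, F ≤ K.map (φ ^ m) := by
  obtain ⟨S, hSfin, hgen⟩ := hexp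
  choose σ hσ using hsurj
  set s' : Set G := σ '' S with hs'
  have hs'fin : s'.Finite := hSfin.image σ
  set S' : AddSubgroup G := AddSubgroup.closure s' with hS'
  have hS'fin : (S' : Set G).Finite := finite_closure hG hs'fin
  have hSle : S ≤ S'.map φ := by
    intro x hx
    exact ⟨σ x, AddSubgroup.subset_closure ⟨x, hx, rfl⟩, hσ x⟩
  have hsupfin : ((S ⊔ S' : AddSubgroup G) : Set G).Finite := by
    rw [← AddSubgroup.closure_eq S, ← AddSubgroup.closure_eq S',
      ← AddSubgroup.closure_union]
    exact finite_closure hG (hSfin.union hS'fin)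
  obtain ⟨n, hn⟩ := hgen (S ⊔ S') hsupfin
  set T : AddSubgroup G := ⨆ k ∈ Finset.range (n + 1), S.map (φ ^ k) with hT
  set K : AddSubgroup G := S' ⊔ T with hK
  -- S is contained in T (take k = 0), hence in K
  have hST : S ≤ T := by
    have : S ≤ S.map (φ ^ 0) := by
      intro x hx
      exact ⟨x, hx, rfl⟩
    refine this.trans ?_
    exact le_iSup_of_le 0 (le_iSup_of_le (Finset.mem_range.2 (Nat.succ_pos n)) le_rfl)
  have hSK : S ≤ K := hST.trans le_sup_right
  -- each S.map (φ^k) with k ≤ n is contained in T, hence K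
  have hmapT : ∀ k, k < n + 1 → S.map (φ ^ k) ≤ K := by
    intro k hk
    rw [hK]
    refine le_trans ?_ le_sup_right
    rw [hT]
    exact le_iSup_of_le k (le_iSup_of_le (Finset.mem_range.2 hk) le_rfl)
  -- K is finite
  have hKfin : (K : Set G).Finite := by
    have hUfin : (s' ∪ ⋃ k ∈ Finset.range (n + 1), (φ ^ k) '' (S : Set G)).Finite := by
      refine hs'fin.union (Set.Finite.biUnion (Finset.finite_toSet _) ?_)
      intro k _
      exact hSfin.image _
    refine (finite_closure hG hUfin).subset ?_
    have : K ≤ AddSubgroup.closure (s' ∪ ⋃ k ∈ Finset.range (n + 1),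
        (φ ^ k) '' (S : Set G)) := by
      refine sup_le ?_ ?_
      · exact AddSubgroup.closure_mono Set.subset_union_left
      · refine iSup_le fun k => iSup_le fun hk => ?_
        rintro x ⟨y, hy, rfl⟩
        refine AddSubgroup.subset_closure (Set.mem_union_right _ ?_)
        exact Set.mem_biUnion hk ⟨y, hy, rfl⟩
    exact this
  -- K ≤ φ(K)
  have hTφ : T ≤ K.map φ := by
    refine iSup_le fun k => iSup_le fun hk => ?_
    rcases k with _ | k
    · -- k = 0
      have h0 : S.map (φ ^ 0) ≤ S := by
        intro x hx
        obtain ⟨y, hy, rfl⟩ := hx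
        exact hy
      refine h0.trans (hSle.trans ?_)
      exact AddSubgroup.map_mono le_sup_left
    · -- k + 1
      rintro x ⟨y, hy, rfl⟩
      have hmem : (φ ^ k) y ∈ K := by
        have hk' : k < n + 1 := Nat.lt_of_succ_lt (Finset.mem_range.1 hk)
        exact hmapT k hk' ⟨y, hy, rfl⟩
      refine ⟨(φ ^ k) y, hmem, ?_⟩
      show φ ((φ ^ k) y) = (φ ^ (k + 1)) y
      rw [pow_succ']; rfl
  have hS'φ : S' ≤ K.map φ := le_sup_right.trans (hn.trans hTφ)
  have hKφ : K ≤ K.map φ := sup_le hS'φ hTφ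
  -- monotonicity of m ↦ φ^m(K)
  have hmono : Monotone fun m => K.map (φ ^ m) := by
    refine monotone_nat_of_le_succ fun m => ?_
    rintro x ⟨y, hy, rfl⟩
    obtain ⟨z, hz, hzy⟩ := hKφ hy
    refine ⟨z, hz, ?_⟩
    show (φ ^ (m + 1)) z = (φ ^ m) y
    rw [pow_succ]
    show (φ ^ m) (φ z) = (φ ^ m) y
    exact congrArg (fun w => (φ ^ m) w) hzy
  refine ⟨K, hKfin, fun F hF => ?_⟩
  obtain ⟨m, hm⟩ := hgen F hF
  refine ⟨m, hm.trans ?_⟩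
  refine iSup_le fun k => iSup_le fun hk => ?_
  have hkm : k ≤ m := Nat.lt_succ_iff.1 (Finset.mem_range.1 hk)
  exact (AddSubgroup.map_mono hSK).trans (hmono hkm)
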